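/- Suppose |1−γ| < 1 and, for every eigenvalue μ_i of X, every complex root of the quadratic p_{μ_i}(λ) = λ² + (γ + η − 2 − ηγ(1−μ_i)) λ + (γ−1)(η−1) has modulus strictly less than 1. Then for any initialization satisfying A_i x_i(0) = b_i for all i and any x̄(0) ∈ ℝ^n, the APC iterates converge to the solution: x̄(t) → x* and x_i(t) → x* for every i as t → ∞. -/

import Mathlib

open Matrix Filter
open scoped ENNReal NNReal

lemma aux_spec_pow_entry {ι : Type*} [Fintype ι] [DecidableEq ι] [Nonempty ι]
    (M : Matrix ι ι ℂ) (h : ∀ z ∈ spectrum ℂ M, ‖z‖ < 1) (a b : ι) :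
    Filter.Tendsto (fun t => (M ^ t) a b) Filter.atTop (nhds 0) := by
  letI : NormedRing (Matrix ι ι ℂ) := Matrix.linftyOpNormedRing
  letI : NormedAlgebra ℂ (Matrix ι ι ℂ) := Matrix.linftyOpNormedAlgebra
  haveI : CompleteSpace (Matrix ι ι ℂ) := FiniteDimensional.complete ℂ _
  have hsr : spectralRadius ℂ M < 1 := by
    have h1 : ∀ z ∈ spectrum ℂ M, ‖z‖₊ < 1 := fun z hz => by
      have := h z hz
      simpa [← NNReal.coe_lt_coe] using this
    simpa using spectrum.spectralRadius_lt_of_forall_lt M h1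
  obtain ⟨ρ, hρ1, hρ2⟩ := ENNReal.lt_iff_exists_nnreal_btwn.mp hsr
  have hρlt : (ρ : ℝ) < 1 := by exact_mod_cast hρ2
  have hg := spectrum.pow_nnnorm_pow_one_div_tendsto_nhds_spectralRadius M
  have hev : ∀ᶠ t : ℕ in atTop, ((‖M ^ t‖₊ : ℝ≥0∞) ^ (1 / (t : ℝ))) < (ρ : ℝ≥0∞) :=
    hg.eventually_lt_const hρ1
  have hbound : ∀ᶠ t : ℕ in atTop, ‖M ^ t‖ ≤ (ρ : ℝ) ^ t := by
    filter_upwards [hev, Filter.eventually_ge_atTop 1] with t ht ht1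
    have htne : (t : ℝ) ≠ 0 := by positivity
    have : ((‖M ^ t‖₊ : ℝ≥0∞) ^ (1 / (t : ℝ))) ^ (t : ℝ) ≤ (ρ : ℝ≥0∞) ^ (t : ℝ) :=
      ENNReal.rpow_le_rpow ht.le (by positivity)
    rw [← ENNReal.rpow_mul, one_div, inv_mul_cancel₀ htne, ENNReal.rpow_one] at this
    rw [ENNReal.rpow_natCast] at this
    have h2 : (‖M ^ t‖₊ : ℝ≥0∞) ≤ ((ρ ^ t : ℝ≥0) : ℝ≥0∞) := by
      simpa [ENNReal.coe_pow] using this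
    have h3 : ‖M ^ t‖₊ ≤ ρ ^ t := by exact_mod_cast h2
    calc ‖M ^ t‖ = ((‖M ^ t‖₊ : ℝ≥0) : ℝ) := rfl
    _ ≤ ((ρ ^ t : ℝ≥0) : ℝ) := by exact_mod_cast h3
    _ = (ρ : ℝ) ^ t := by push_cast; ring
  have hnorm0 : Tendsto (fun t => ‖M ^ t‖) atTop (nhds 0) := by
    apply squeeze_zero' (Filter.Eventually.of_forall (fun t => norm_nonneg _)) hbound
    simpa using tendsto_pow_atTop_nhds_zero_of_lt_one (by positivity) hρlt
  have hentry : ∀ t : ℕ, ‖(M ^ t) a b‖ ≤ ‖M ^ t‖ := by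
    intro t
    have : ‖(M ^ t) a b‖₊ ≤ ‖M ^ t‖₊ := by
      rw [Matrix.linfty_opNNNorm_def]
      refine le_trans ?_ (Finset.le_sup (Finset.mem_univ a))
      exact Finset.single_le_sum (f := fun j => ‖(M ^ t) a j‖₊) (fun _ _ => zero_le) (Finset.mem_univ b)
    exact_mod_cast this
  exact squeeze_zero_norm hentry hnorm0


lemma sum_mulVec_aux {R : Type*} [NonUnitalNonAssocSemiring R] {ι κ κ₂ : Type*} [Fintype ι]
    [Fintype κ₂] (f : ι → Matrix κ κ₂ R) (v : κ₂ → R) :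
    (∑ i, f i) *ᵥ v = ∑ i, (f i) *ᵥ v := by
  funext j
  simp only [Matrix.mulVec, dotProduct, Finset.sum_apply, Matrix.sum_apply,
    Finset.sum_mul]
  rw [Finset.sum_comm]

theorem apc_convergence
    {n p m : ℕ}
    (A : Fin m → Matrix (Fin p) (Fin n) ℝ)
    (b : Fin m → Fin p → ℝ)
    (hfr : ∀ i, Invertible (A i * (A i)ᵀ))
    (xstar : Fin n → ℝ)
    (hsol : ∀ i, (A i).mulVec xstar = b i)
    (huniq : ∀ y : Fin n → ℝ, (∀ i, (A i).mulVec y = b i) → y = xstar)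
    (γ η : ℝ)
    (P : Fin m → Matrix (Fin n) (Fin n) ℝ)
    (hP : ∀ i, P i = 1 - (A i)ᵀ * (A i * (A i)ᵀ)⁻¹ * A i)
    (X : Matrix (Fin n) (Fin n) ℝ)
    (hX : X = ((m : ℝ))⁻¹ • ∑ i, (A i)ᵀ * (A i * (A i)ᵀ)⁻¹ * A i)
    (hγ : |1 - γ| < 1)
    (hroots : ∀ μ ∈ spectrum ℝ X, ∀ z : ℂ,
      z ^ 2 + ((γ : ℂ) + (η : ℂ) - 2 - (η : ℂ) * (γ : ℂ) * (1 - (μ : ℂ))) * z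
        + ((γ : ℂ) - 1) * ((η : ℂ) - 1) = 0 → ‖z‖ < 1)
    (x : ℕ → Fin m → Fin n → ℝ)
    (xbar : ℕ → Fin n → ℝ)
    (hx : ∀ t i, x (t + 1) i = x t i + γ • (P i).mulVec (xbar t - x t i))
    (hxbar : ∀ t, xbar (t + 1) = (η / m) • ∑ i, x (t + 1) i + (1 - η) • xbar t)
    (hinit : ∀ i, (A i).mulVec (x 0 i) = b i) :
    Filter.Tendsto xbar Filter.atTop (nhds xstar) ∧
      ∀ i, Filter.Tendsto (fun t => x t i) Filter.atTop (nhds xstar) := by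
  -- trivial case n = 0
  rcases Nat.eq_zero_or_pos n with hn | hn
  · subst hn
    have hxb : ∀ t, xbar t = xstar := fun t => funext (fun j => j.elim0)
    have hxx : ∀ t i, x t i = xstar := fun t i => funext (fun j => j.elim0)
    constructor
    · simpa [funext hxb] using (tendsto_const_nhds : Tendsto (fun _ : ℕ => xstar) atTop (nhds xstar))
    · intro i
      have : (fun t => x t i) = fun _ => xstar := funext (fun t => hxx t i)
      rw [this]; exact tendsto_const_nhds
  -- m > 0
  have hm : 0 < m := by
    by_contra hm
    push_neg at hm
    interval_cases m
    have := huniq (xstar + 1) (fun i => i.elim0)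
    have h0 := congrFun this ⟨0, hn⟩
    simp at h0
  have hmR : (m : ℝ) ≠ 0 := Nat.cast_ne_zero.mpr hm.ne'
  -- γ bounds
  have hγ2 := abs_lt.mp hγ
  have hγpos : 0 < γ := by linarith [hγ2.2]
  -- X symmetric
  have hinvsym : ∀ i, ((A i * (A i)ᵀ)⁻¹)ᵀ = (A i * (A i)ᵀ)⁻¹ := by
    intro i
    haveI := hfr i
    rw [Matrix.transpose_nonsing_inv]
    congr 1
    rw [Matrix.transpose_mul, Matrix.transpose_transpose]
  have hQsym : ∀ i, ((A i)ᵀ * (A i * (A i)ᵀ)⁻¹ * A i)ᵀ = (A i)ᵀ * (A i * (A i)ᵀ)⁻¹ * A i := by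
    intro i
    simp only [Matrix.transpose_mul, Matrix.transpose_transpose, hinvsym i, Matrix.mul_assoc]
  have hXsym : Xᵀ = X := by
    rw [hX, Matrix.transpose_smul, Matrix.transpose_sum]
    congr 1
    exact Finset.sum_congr rfl fun i _ => hQsym i
  -- η ≠ 0
  have hXherm : X.IsHermitian := by
    have h1 : Xᴴ = Xᵀ := by
      ext a c
      simp [Matrix.conjTranspose_apply, Matrix.transpose_apply]
    exact h1.trans hXsym
  have hμ0 := hXherm.eigenvalues_mem_spectrum_real ⟨0, hn⟩
  have hη : η ≠ 0 := by
    intro hη0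
    have h1 := hroots _ hμ0 1 (by rw [hη0]; push_cast; ring)
    simp at h1
  -- basic projection facts
  have hAQ : ∀ i, A i * ((A i)ᵀ * (A i * (A i)ᵀ)⁻¹ * A i) = A i := by
    intro i
    haveI := hfr i
    calc A i * ((A i)ᵀ * (A i * (A i)ᵀ)⁻¹ * A i)
        = (A i * (A i)ᵀ) * (A i * (A i)ᵀ)⁻¹ * A i := by
          simp only [Matrix.mul_assoc]
      _ = A i := by rw [Matrix.mul_inv_of_invertible]; simp
  have hAP : ∀ i, A i * P i = 0 := by
    intro i
    rw [hP i, Matrix.mul_sub, Matrix.mul_one, hAQ i, sub_self]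
  have hPid : ∀ i (v : Fin n → ℝ), (A i) *ᵥ v = 0 → (P i) *ᵥ v = v := by
    intro i v hv
    rw [hP i, Matrix.sub_mulVec, Matrix.one_mulVec]
    have : ((A i)ᵀ * (A i * (A i)ᵀ)⁻¹ * A i) *ᵥ v = 0 := by
      rw [← Matrix.mulVec_mulVec, hv, Matrix.mulVec_zero]
    rw [this, sub_zero]
  have hAx : ∀ t i, (A i) *ᵥ x t i = b i := by
    intro t
    induction t with
    | zero => exact hinit
    | succ t ih =>
      intro i
      rw [hx t i, Matrix.mulVec_add, Matrix.mulVec_smul, Matrix.mulVec_mulVec, hAP i,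
        Matrix.zero_mulVec, smul_zero, add_zero, ih i]
  -- error vectors
  set e : ℕ → Fin m → Fin n → ℝ := fun t i => x t i - xstar with he_def
  set ebar : ℕ → Fin n → ℝ := fun t => xbar t - xstar with hebar_def
  have hPe : ∀ t i, (P i) *ᵥ (e t i) = e t i := by
    intro t i
    apply hPid
    rw [Matrix.mulVec_sub, hAx t i, hsol i, sub_self]
  have he : ∀ t i, e (t+1) i = (1-γ) • e t i + γ • ((P i) *ᵥ ebar t) := by
    intro t i
    have h1 : xbar t - x t i = ebar t - e t i := by
      simp only [he_def, hebar_def]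
      abel
    show x (t+1) i - xstar = _
    rw [hx t i, h1, Matrix.mulVec_sub, hPe t i]
    funext j
    simp only [he_def, hebar_def, Pi.add_apply, Pi.sub_apply, Pi.smul_apply, smul_eq_mul]
    ring
  have hQX : ∑ i, (A i)ᵀ * (A i * (A i)ᵀ)⁻¹ * A i = (m : ℝ) • X := by
    rw [hX, smul_smul, mul_inv_cancel₀ hmR, one_smul]
  have hSumP : ∑ i, P i = (m : ℝ) • ((1 : Matrix (Fin n) (Fin n) ℝ) - X) := by
    simp only [hP]
    rw [Finset.sum_sub_distrib, hQX, smul_sub, Finset.sum_const, Finset.card_univ,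
      Fintype.card_fin, ← Nat.cast_smul_eq_nsmul ℝ]
  have hebar1 : ∀ t, ebar (t+1) = (η/m) • ∑ i, e (t+1) i + (1-η) • ebar t := by
    intro t
    funext j
    simp only [hebar_def, he_def, Pi.add_apply, Pi.smul_apply, Pi.sub_apply, Finset.sum_apply,
      smul_eq_mul, hxbar t]
    rw [Finset.sum_sub_distrib, Finset.sum_const, Finset.card_univ, Fintype.card_fin]
    simp only [nsmul_eq_mul]
    field_simp
    ring
  have hebar2 : ∀ t, ebar (t+1) = (η*(1-γ)/m) • ∑ i, e t i
      + (η*γ) • (((1 : Matrix (Fin n) (Fin n) ℝ) - X) *ᵥ ebar t) + (1-η) • ebar t := by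
    intro t
    have hsum : ∑ i, e (t+1) i = (1-γ) • ∑ i, e t i
        + (γ * m) • (((1 : Matrix (Fin n) (Fin n) ℝ) - X) *ᵥ ebar t) := by
      have : ∀ i : Fin m, e (t+1) i = (1-γ) • e t i + γ • ((P i) *ᵥ ebar t) := he t
      rw [Finset.sum_congr rfl fun i _ => this i, Finset.sum_add_distrib, ← Finset.smul_sum,
        ← Finset.smul_sum, ← sum_mulVec_aux, hSumP, Matrix.smul_mulVec, smul_smul]
    rw [hebar1 t, hsum]
    funext j
    simp only [Pi.add_apply, Pi.smul_apply, Finset.sum_apply, smul_eq_mul]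
    field_simp
  -- the block matrix
  set M : Matrix ((Fin m × Fin n) ⊕ Fin n) ((Fin m × Fin n) ⊕ Fin n) ℝ :=
    Matrix.fromBlocks ((1-γ) • 1) (Matrix.of fun q k => γ * P q.1 q.2 k)
      (Matrix.of fun k q => if q.2 = k then η*(1-γ)/m else 0)
      ((η*γ) • ((1 : Matrix (Fin n) (Fin n) ℝ) - X) + (1-η) • 1) with hM_def
  set u : ℕ → ((Fin m × Fin n) ⊕ Fin n) → ℝ :=
    fun t => Sum.elim (fun q => e t q.1 q.2) (ebar t) with hu_def
  have hu : ∀ t, u (t+1) = M *ᵥ u t := by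
    intro t
    rw [hu_def, hM_def]
    show Sum.elim _ _ = _ *ᵥ Sum.elim _ _
    rw [Matrix.fromBlocks_mulVec]
    simp only [Sum.elim_comp_inl, Sum.elim_comp_inr]
    have hC : (Matrix.of fun (k : Fin n) (q : Fin m × Fin n) =>
          if q.2 = k then η*(1-γ)/m else 0) *ᵥ (fun q : Fin m × Fin n => e t q.1 q.2)
        = fun k => (η*(1-γ)/m) * ∑ i, e t i k := by
      funext k'
      simp only [Matrix.mulVec, dotProduct, Matrix.of_apply]
      rw [Fintype.sum_prod_type, Finset.mul_sum]
      refine Finset.sum_congr rfl fun i _ => ?_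
      rw [Finset.sum_eq_single k']
      · simp
      · intro c _ hc
        simp [if_neg hc]
      · simp
    rw [hC]
    funext a
    cases a with
    | inl q =>
      show e (t+1) q.1 q.2 = _
      rw [he t q.1]
      simp only [Sum.elim_inl, Pi.add_apply, Matrix.smul_mulVec, Matrix.one_mulVec,
        Pi.smul_apply, smul_eq_mul, Matrix.mulVec, dotProduct, Matrix.of_apply,
        Finset.mul_sum, mul_assoc]
    | inr k =>
      show ebar (t+1) k = _
      rw [hebar2 t]
      simp only [Sum.elim_inr, Pi.add_apply, Pi.smul_apply, smul_eq_mul, Finset.sum_apply,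
        Matrix.add_mulVec, Matrix.smul_mulVec, Matrix.one_mulVec]
      ring
  have hut : ∀ t, u t = (M ^ t) *ᵥ u 0 := by
    intro t
    induction t with
    | zero => simp [Matrix.one_mulVec]
    | succ t ih =>
      rw [hu t, ih, Matrix.mulVec_mulVec, ← pow_succ']
  haveI : Nonempty ((Fin m × Fin n) ⊕ Fin n) := ⟨Sum.inr ⟨0, hn⟩⟩
  have hspec : ∀ z ∈ spectrum ℂ (M.map (algebraMap ℝ ℂ)), ‖z‖ < 1 := by
    intro z hz
    have hdet : ((z • (1 : Matrix _ _ ℂ)) - M.map (algebraMap ℝ ℂ)).det = 0 := by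
      rw [spectrum.mem_iff] at hz
      by_contra hd
      apply hz
      rw [Algebra.algebraMap_eq_smul_one]
      exact (Matrix.isUnit_iff_isUnit_det _).mpr (isUnit_iff_ne_zero.mpr hd)
    obtain ⟨v, hv0, hveq⟩ := Matrix.exists_mulVec_eq_zero_iff.mpr hdet
    have hMv : (M.map (algebraMap ℝ ℂ)) *ᵥ v = z • v := by
      rw [Matrix.sub_mulVec, Matrix.smul_mulVec, Matrix.one_mulVec] at hveq
      exact (sub_eq_zero.mp hveq).symm
    set f : Fin m → Fin n → ℂ := fun i j => v (Sum.inl (i, j)) with hf_def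
    set w : Fin n → ℂ := fun k => v (Sum.inr k) with hw_def
    set Xc : Matrix (Fin n) (Fin n) ℂ := X.map Complex.ofReal with hXc_def
    have hvelim : v = Sum.elim (fun q : Fin m × Fin n => f q.1 q.2) w := by
      funext a
      cases a with
      | inl q => simp [hf_def]
      | inr k => simp [hw_def]
    have hmap : M.map (algebraMap ℝ ℂ) = Matrix.fromBlocks
        (((1:ℂ) - γ) • 1) (Matrix.of fun q k => (γ:ℂ) * ((P q.1 q.2 k : ℝ) : ℂ))
        (Matrix.of fun k q => if q.2 = k then ((η*(1-γ)/m : ℝ) : ℂ) else 0)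
        (((η:ℂ) * (γ:ℂ)) • (1 - Xc) + ((1:ℂ) - η) • 1) := by
      rw [hM_def]
      ext a c
      cases a with
      | inl q =>
        cases c with
        | inl q' =>
          by_cases hqq : q = q' <;>
            simp [Matrix.map_apply, Matrix.fromBlocks_apply₁₁, Matrix.smul_apply,
              Matrix.one_apply, hqq, Complex.coe_algebraMap]
        | inr k =>
          simp [Matrix.map_apply, Matrix.fromBlocks_apply₁₂, Complex.coe_algebraMap]
      | inr k =>
        cases c with
        | inl q =>
          by_cases hqk : q.2 = k <;>
            simp [Matrix.map_apply, Matrix.fromBlocks_apply₂₁, hqk, Complex.coe_algebraMap]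
        | inr k' =>
          by_cases hkk : k = k' <;>
            simp [Matrix.map_apply, Matrix.fromBlocks_apply₂₂, Matrix.add_apply,
              Matrix.smul_apply, Matrix.sub_apply, Matrix.one_apply, hkk, hXc_def,
              Complex.coe_algebraMap] <;> push_cast <;> ring
    rw [hvelim, hmap, Matrix.fromBlocks_mulVec] at hMv
    simp only [Sum.elim_comp_inl, Sum.elim_comp_inr] at hMv
    have hCc : (Matrix.of fun (k : Fin n) (q : Fin m × Fin n) =>
          if q.2 = k then ((η*(1-γ)/m : ℝ) : ℂ) else 0) *ᵥ (fun q : Fin m × Fin n => f q.1 q.2)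
        = fun k => ((η*(1-γ)/m : ℝ) : ℂ) * ∑ i, f i k := by
      funext k'
      simp only [Matrix.mulVec, dotProduct, Matrix.of_apply]
      rw [Fintype.sum_prod_type, Finset.mul_sum]
      refine Finset.sum_congr rfl fun i _ => ?_
      rw [Finset.sum_eq_single k']
      · simp
      · intro c _ hc
        simp [if_neg hc]
      · simp
    rw [hCc] at hMv
    have hEq1 : ∀ (i : Fin m) (j : Fin n),
        (z - 1 + γ) * f i j = (γ:ℂ) * (((P i).map Complex.ofReal) *ᵥ w) j := by
      intro i j
      have h0 := congrFun hMv (Sum.inl (i, j))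
      simp only [Sum.elim_inl, Pi.add_apply, Matrix.smul_mulVec, Matrix.one_mulVec,
        Pi.smul_apply, smul_eq_mul, Matrix.mulVec, dotProduct, Matrix.of_apply,
        mul_assoc] at h0
      rw [← Finset.mul_sum] at h0
      simp only [Matrix.mulVec, dotProduct, Matrix.map_apply]
      linear_combination -h0
    have hEq2 : ∀ k : Fin n,
        ((η*(1-γ)/m : ℝ) : ℂ) * ∑ i, f i k
          + (η:ℂ) * (γ:ℂ) * (w k - (Xc *ᵥ w) k)
          + ((1:ℂ) - η) * w k = z * w k := by
      intro k
      have h0 := congrFun hMv (Sum.inr k)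
      simp only [Sum.elim_inr, Pi.add_apply, Matrix.add_mulVec, Matrix.smul_mulVec,
        Matrix.one_mulVec, Matrix.sub_mulVec, Pi.smul_apply, Pi.sub_apply, smul_eq_mul] at h0
      linear_combination h0
    by_cases hzγ : z = ((1 - γ : ℝ) : ℂ)
    · rw [hzγ, Complex.norm_real, Real.norm_eq_abs]
      exact hγ
    have hzγ' : z - 1 + γ ≠ 0 := by
      intro h
      apply hzγ
      push_cast
      linear_combination h
    have hw0 : w ≠ 0 := by
      intro hww
      apply hv0
      have hf0 : ∀ (i : Fin m) (j : Fin n), f i j = 0 := by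
        intro i j
        have h1 := hEq1 i j
        rw [hww] at h1
        simp only [Matrix.mulVec_zero, Pi.zero_apply, mul_zero] at h1
        rcases mul_eq_zero.mp h1 with h | h
        · exact absurd h hzγ'
        · exact h
      rw [hvelim, hww]
      funext a
      cases a with
      | inl q => simp [hf0]
      | inr k => simp
    by_cases hz0 : z = 0
    · simp [hz0]
    -- complexified sum of projections
    have hSumPc : ∑ i, (P i).map Complex.ofReal = (m:ℂ) • (1 - Xc) := by
      ext a c
      have h1 := congrFun (congrFun hSumP a) c
      simp only [Matrix.sum_apply, Matrix.smul_apply, Matrix.sub_apply, Matrix.one_apply,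
        smul_eq_mul] at h1
      simp only [Matrix.sum_apply, Matrix.map_apply, Matrix.smul_apply, Matrix.sub_apply,
        Matrix.one_apply, smul_eq_mul, hXc_def]
      rw [show (∑ x, ((P x a c : ℝ) : ℂ)) = ((∑ x, P x a c : ℝ) : ℂ) by push_cast; rfl, h1]
      split_ifs <;> push_cast <;> ring
    have hmC : (m : ℂ) ≠ 0 := Nat.cast_ne_zero.mpr hm.ne'
    have hγC : ((γ : ℝ) : ℂ) ≠ 0 := Complex.ofReal_ne_zero.mpr hγpos.ne'
    have hηC : ((η : ℝ) : ℂ) ≠ 0 := Complex.ofReal_ne_zero.mpr hη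
    have hstar : ∀ k : Fin n,
        (η:ℂ) * (γ:ℂ) * z * (w k - (Xc *ᵥ w) k)
          = (z - 1 + γ) * (z - 1 + η) * w k := by
      intro k
      have hB : (z - 1 + γ) * (∑ i, f i k)
          = (γ:ℂ) * (m:ℂ) * (w k - (Xc *ᵥ w) k) := by
        calc (z - 1 + γ) * (∑ i, f i k) = ∑ i, (z - 1 + γ) * f i k := Finset.mul_sum _ _ _
          _ = ∑ i, (γ:ℂ) * (((P i).map Complex.ofReal) *ᵥ w) k :=
              Finset.sum_congr rfl fun i _ => hEq1 i k
          _ = (γ:ℂ) * ∑ i, (((P i).map Complex.ofReal) *ᵥ w) k := (Finset.mul_sum _ _ _).symm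
          _ = (γ:ℂ) * (((∑ i, (P i).map Complex.ofReal) *ᵥ w) k) := by
              rw [sum_mulVec_aux, Finset.sum_apply]
          _ = (γ:ℂ) * ((((m:ℂ) • (1 - Xc)) *ᵥ w) k) := by rw [hSumPc]
          _ = (γ:ℂ) * (m:ℂ) * (w k - (Xc *ᵥ w) k) := by
              rw [Matrix.smul_mulVec, Matrix.sub_mulVec, Matrix.one_mulVec]
              simp only [Pi.smul_apply, Pi.sub_apply, smul_eq_mul]
              ring
      have hc1 : ((η*(1-γ)/m : ℝ) : ℂ) * (m:ℂ) = (η:ℂ) * ((1:ℂ) - γ) := by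
        push_cast
        field_simp [hmC]
      linear_combination (z - 1 + γ) * hEq2 k - ((η*(1-γ)/m : ℝ) : ℂ) * hB
        - (γ:ℂ) * (w k - (Xc *ᵥ w) k) * hc1
    -- eigenvalue of Xc
    have hdne : (η:ℂ) * (γ:ℂ) * z ≠ 0 := by
      exact mul_ne_zero (mul_ne_zero hηC hγC) hz0
    set μ : ℂ := 1 - (z - 1 + γ) * (z - 1 + η) / ((η:ℂ) * (γ:ℂ) * z) with hμ_def
    have hXw : ∀ k, (Xc *ᵥ w) k = μ * w k := by
      intro k
      have h1 := hstar k
      rw [hμ_def]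
      field_simp [hmC, hγC, hηC, hz0]
      linear_combination -h1
    obtain ⟨k0, hk0⟩ : ∃ k, w k ≠ 0 := by
      by_contra hcon
      push_neg at hcon
      exact hw0 (funext hcon)
    -- μ is real
    have hμconj : (starRingEnd ℂ) μ = μ := by
      set S : ℂ := ∑ k, (starRingEnd ℂ) (w k) * w k with hS_def
      have hSre : S = ((∑ k, Complex.normSq (w k) : ℝ) : ℂ) := by
        rw [hS_def]
        push_cast
        exact Finset.sum_congr rfl fun k _ => by
          rw [Complex.normSq_eq_conj_mul_self]
      have hS0 : S ≠ 0 := by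
        rw [hSre]
        rw [Complex.ofReal_ne_zero]
        have hpos : 0 < ∑ k, Complex.normSq (w k) := by
          apply Finset.sum_pos' (fun k _ => Complex.normSq_nonneg _)
          exact ⟨k0, Finset.mem_univ k0, Complex.normSq_pos.mpr hk0⟩
        exact hpos.ne'
      have hT : ∑ k, (starRingEnd ℂ) (w k) * (Xc *ᵥ w) k = μ * S := by
        rw [hS_def, Finset.mul_sum]
        exact Finset.sum_congr rfl fun k _ => by rw [hXw k]; ring
      have hTsym : (starRingEnd ℂ) (∑ k, (starRingEnd ℂ) (w k) * (Xc *ᵥ w) k)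
          = ∑ k, (starRingEnd ℂ) (w k) * (Xc *ᵥ w) k := by
        have hXs : ∀ a c, X a c = X c a := by
          intro a c
          have h4 := congrFun (congrFun hXsym c) a
          rw [Matrix.transpose_apply] at h4
          exact h4
        simp only [Matrix.mulVec, dotProduct, Matrix.map_apply, hXc_def, map_sum,
          Finset.mul_sum]
        rw [Finset.sum_comm]
        refine Finset.sum_congr rfl fun a _ => Finset.sum_congr rfl fun c _ => ?_
        rw [(starRingEnd ℂ).map_mul, (starRingEnd ℂ).map_mul, Complex.conj_conj,
          Complex.conj_ofReal, hXs c a]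
        ring
      have h2 : (starRingEnd ℂ) (μ * S) = μ * S := by rw [← hT, hTsym, hT]
      rw [(starRingEnd ℂ).map_mul] at h2
      have hSconj : (starRingEnd ℂ) S = S := by rw [hSre, Complex.conj_ofReal]
      rw [hSconj] at h2
      exact mul_right_cancel₀ hS0 h2
    obtain ⟨μr, hμr⟩ : ∃ μr : ℝ, (μr : ℂ) = μ := ⟨μ.re, Complex.conj_eq_iff_re.mp hμconj⟩
    have hmem : μr ∈ spectrum ℝ X := by
      rw [spectrum.mem_iff]
      intro hU
      rw [Algebra.algebraMap_eq_smul_one] at hU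
      have hdetU := (Matrix.isUnit_iff_isUnit_det _).mp hU
      rw [isUnit_iff_ne_zero] at hdetU
      apply hdetU
      have hmap2 : ((μr • (1 : Matrix (Fin n) (Fin n) ℝ) - X).map (algebraMap ℝ ℂ)) *ᵥ w
          = 0 := by
        funext k
        have h3 : ((μr • (1 : Matrix (Fin n) (Fin n) ℝ) - X).map (algebraMap ℝ ℂ))
            = μ • (1 : Matrix (Fin n) (Fin n) ℂ) - Xc := by
          ext a c
          by_cases hac : a = c <;>
            simp [Matrix.map_apply, Matrix.sub_apply, Matrix.smul_apply, Matrix.one_apply,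
              hac, hXc_def, Complex.coe_algebraMap, ← hμr]
        rw [h3, Matrix.sub_mulVec, Matrix.smul_mulVec, Matrix.one_mulVec]
        simp only [Pi.sub_apply, Pi.smul_apply, Pi.zero_apply, smul_eq_mul, hXw k]
        ring
      have hdetC := Matrix.exists_mulVec_eq_zero_iff.mp ⟨w, hw0, hmap2⟩
      rw [← RingHom.mapMatrix_apply, ← RingHom.map_det] at hdetC
      simpa using hdetC
    have hkey : (η:ℂ) * (γ:ℂ) * z * (1 - μ) = (z - 1 + γ) * (z - 1 + η) := by
      have h1 := hstar k0
      have h2 := hXw k0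
      have h3 : ((η:ℂ) * (γ:ℂ) * z * (1 - μ)) * w k0
          = ((z - 1 + γ) * (z - 1 + η)) * w k0 := by
        linear_combination h1 + (η:ℂ) * (γ:ℂ) * z * h2
      exact mul_right_cancel₀ hk0 h3
    refine hroots μr hmem z ?_
    linear_combination -hkey + (η:ℂ) * (γ:ℂ) * z * hμr
  have hentry : ∀ a c, Tendsto (fun t => (M ^ t) a c) atTop (nhds (0:ℝ)) := by
    intro a c
    have h1 := aux_spec_pow_entry (M.map (algebraMap ℝ ℂ)) hspec a c
    have h2 : ∀ t, ((M.map (algebraMap ℝ ℂ)) ^ t) a c = (((M ^ t) a c : ℝ) : ℂ) := by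
      intro t
      rw [← RingHom.mapMatrix_apply, ← map_pow, RingHom.mapMatrix_apply]
      rfl
    have h3 := h1.norm
    rw [norm_zero] at h3
    refine squeeze_zero_norm (fun t => ?_) h3
    rw [h2 t, Complex.norm_real]
  have hu0 : ∀ a, Tendsto (fun t => u t a) atTop (nhds 0) := by
    intro a
    have hform : ∀ t, u t a = ∑ c, (M ^ t) a c * u 0 c := by
      intro t
      rw [hut t]
      rfl
    have h4 : Tendsto (fun t => ∑ c, (M ^ t) a c * u 0 c) atTop (nhds 0) := by
      have := tendsto_finset_sum (Finset.univ)
        (fun c (_ : c ∈ Finset.univ) => (hentry a c).mul_const (u 0 c))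
      simpa using this
    exact (funext hform : (fun t => u t a) = _) ▸ h4
  constructor
  · rw [tendsto_pi_nhds]
    intro k
    have h4 := (hu0 (Sum.inr k)).add_const (xstar k)
    rw [zero_add] at h4
    have : (fun t => xbar t k) = fun t => u t (Sum.inr k) + xstar k := by
      funext t
      simp [hu_def, hebar_def]
    rw [this]
    exact h4
  · intro i
    rw [tendsto_pi_nhds]
    intro j
    have h4 := (hu0 (Sum.inl (i, j))).add_const (xstar j)
    rw [zero_add] at h4
    have : (fun t => x t i j) = fun t => u t (Sum.inl (i, j)) + xstar j := by
      funext t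
      simp [hu_def, he_def]
    rw [this]
    exact h4
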